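/- For all d ∈ ℕ and all integers c_i (i ≥ 1), the coefficient of t^d in ∏_{i≥1}(1-t^i)^{-c_i} equals the sum over all partitions λ of d of ∏_{i≥1} binom(c_i + λ_i - λ_{i+1} - 1, λ_i - λ_{i+1}). -/

import Mathlib

open PowerSeries

/-- `(1 + u)^q` for a power series `u` with zero constant term and `q : ℚ`,
defined coefficientwise via the binomial series, with
`qbinom q k = q(q-1)⋯(q-k+1)/k!`. -/
noncomputable def qbinom (q : ℚ) (k : ℕ) : ℚ :=
  (∏ j ∈ Finset.range k, (q - (j : ℚ))) / (k.factorial : ℚ)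

noncomputable def onePlusPow (u : PowerSeries ℚ) (q : ℚ) : PowerSeries ℚ :=
  PowerSeries.mk fun n =>
    PowerSeries.coeff n (∑ k ∈ Finset.range (n + 1), qbinom q k • u ^ k)

/-- The infinite product `∏_{i ≥ 1} g i`, defined coefficientwise. -/
noncomputable def prodTail (g : ℕ → PowerSeries ℚ) : PowerSeries ℚ :=
  PowerSeries.mk fun n => PowerSeries.coeff n (∏ i ∈ Finset.Icc 1 n, g i)

/-- Generalized binomial coefficient `binom(a, b) = a(a-1)⋯(a-b+1)/b!` for `a : ℤ`,
`b : ℕ`; for negative `a` it is given by `binom(a,b) = (-1)^b binom(b-1-a, b)`. -/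
def zbinom (a : ℤ) (b : ℕ) : ℤ :=
  if 0 ≤ a then (a.toNat.choose b : ℤ)
  else (-1) ^ b * (((b : ℤ) - 1 - a).toNat.choose b : ℤ)

open scoped Classical in
/-- The (finite) set of partitions `λ` of `e`, encoded as functions `l : ℕ → ℕ` with
`l (i-1) = λᵢ` (so `l 0 = λ₁`), antitone and summing to `e`; all parts beyond index
`e+2` vanish automatically. -/
noncomputable def partitionFinset (e : ℕ) : Finset (ℕ → ℕ) :=
  (Finset.univ.filter fun l : Fin (e + 2) → Fin (e + 1) =>
      (∀ i j, i ≤ j → l j ≤ l i) ∧ ∑ i, (l i : ℕ) = e).image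
    fun l n => if h : n < e + 2 then (l ⟨n, h⟩ : ℕ) else 0

section Aux

lemma zbinom_zero (a : ℤ) : zbinom a 0 = 1 := by
  unfold zbinom; split <;> simp

lemma prod_eq_zbinom (a : ℤ) (m : ℕ) :
    (∏ j ∈ Finset.range m, (a + j)) = m.factorial * zbinom (a + m - 1) m := by
  rcases Nat.eq_zero_or_pos m with rfl | hm
  · simp [zbinom_zero]
  rcases le_or_gt 1 a with ha | ha
  · obtain ⟨n, rfl⟩ : ∃ n : ℕ, a = (n : ℤ) + 1 := ⟨(a - 1).toNat, by omega⟩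
    have h1 : ∏ j ∈ Finset.range m, ((n : ℤ) + 1 + j) =
        ∏ j ∈ Finset.range m, ((n + m - j : ℕ) : ℤ) := by
      rw [← Finset.prod_range_reflect]
      refine Finset.prod_congr rfl fun j hj => ?_
      have hj' := Finset.mem_range.mp hj
      omega
    rw [h1, ← Nat.cast_prod, ← Nat.descFactorial_eq_prod_range,
      Nat.descFactorial_eq_factorial_mul_choose]
    unfold zbinom
    rw [if_pos (by omega)]
    have h2 : ((n : ℤ) + 1 + m - 1).toNat = n + m := by omega
    rw [h2]
    push_cast
    ring
  · set b : ℕ := (-a).toNat with hb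
    have hab : a = -(b : ℤ) := by omega
    rcases lt_or_ge b m with hbm | hbm
    · have hz : ∏ j ∈ Finset.range m, (a + j) = 0 :=
        Finset.prod_eq_zero (Finset.mem_range.mpr hbm) (by omega)
      rw [hz]
      unfold zbinom
      rw [if_pos (by omega)]
      have h2 : (a + m - 1).toNat = m - 1 - b := by omega
      rw [h2, Nat.choose_eq_zero_of_lt (by omega)]
      simp
    · have h1 : ∏ j ∈ Finset.range m, (a + j) =
          ∏ j ∈ Finset.range m, ((-1) * ((b - j : ℕ) : ℤ)) := by
        refine Finset.prod_congr rfl fun j hj => ?_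
        have hj' := Finset.mem_range.mp hj
        omega
      rw [h1, Finset.prod_mul_distrib, Finset.prod_const, ← Nat.cast_prod,
        ← Nat.descFactorial_eq_prod_range, Nat.descFactorial_eq_factorial_mul_choose]
      unfold zbinom
      rw [if_neg (by omega)]
      have h2 : ((m : ℤ) - 1 - (a + m - 1)).toNat = b := by omega
      rw [h2, Finset.card_range]
      push_cast
      ring

lemma key (a : ℤ) (m : ℕ) :
    (-1 : ℚ) ^ m * qbinom (-(a : ℚ)) m = ((zbinom (a + m - 1) m : ℤ) : ℚ) := by
  unfold qbinom
  have h1 : ∏ j ∈ Finset.range m, (-(a : ℚ) - j) =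
      (-1) ^ m * ∏ j ∈ Finset.range m, ((a : ℚ) + j) := by
    have h0 : ∀ j ∈ Finset.range m, (-(a : ℚ) - j) = (-1) * ((a : ℚ) + j) :=
      fun j _ => by ring
    rw [Finset.prod_congr rfl h0, Finset.prod_mul_distrib, Finset.prod_const,
      Finset.card_range]
  have h2 : ∏ j ∈ Finset.range m, ((a : ℚ) + j) =
      (m.factorial : ℚ) * ((zbinom (a + m - 1) m : ℤ) : ℚ) := by
    have := prod_eq_zbinom a m
    have := congrArg (fun z : ℤ => (z : ℚ)) this
    push_cast at this ⊢
    convert this using 2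
  rw [h1, h2]
  have hne : (m.factorial : ℚ) ≠ 0 := Nat.cast_ne_zero.mpr m.factorial_ne_zero
  field_simp
  ring_nf
  rw [show ((-1 : ℚ)) ^ (m * 2) = 1 from Even.neg_one_pow ⟨m, by ring⟩, mul_one]

lemma coeff_factor (a : ℤ) (i n : ℕ) (hi : 1 ≤ i) :
    PowerSeries.coeff n (onePlusPow (-(X ^ i)) (-(a : ℚ))) =
      if i ∣ n then ((zbinom (a + (n / i : ℕ) - 1) (n / i) : ℤ) : ℚ) else 0 := by
  unfold onePlusPow
  rw [coeff_mk, map_sum]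
  have hterm : ∀ k, PowerSeries.coeff n (qbinom (-(a : ℚ)) k • (-(X : PowerSeries ℚ) ^ i) ^ k)
      = if n = i * k then (-1 : ℚ) ^ k * qbinom (-(a : ℚ)) k else 0 := by
    intro k
    have hpow : ((-(X : PowerSeries ℚ) ^ i)) ^ k = ((-1 : ℚ) ^ k) • (X : PowerSeries ℚ) ^ (i * k) := by
      rw [neg_pow, ← pow_mul, PowerSeries.smul_eq_C_mul, map_pow, map_neg, map_one]
    rw [hpow, map_smul, map_smul, PowerSeries.coeff_X_pow]
    simp only [smul_eq_mul]
    split <;> ring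
  rw [Finset.sum_congr rfl fun k _ => hterm k]
  by_cases hd : i ∣ n
  · rw [if_pos hd]
    obtain ⟨m, rfl⟩ := hd
    have hm : m ∈ Finset.range (i * m + 1) := Finset.mem_range.mpr (by nlinarith)
    rw [Finset.sum_eq_single_of_mem m hm
      (fun k _ hk => if_neg (fun h => hk (by exact (Nat.eq_of_mul_eq_mul_left (by omega) h.symm)))),
      if_pos rfl, Nat.mul_div_cancel_left m (by omega)]
    exact key a m
  · rw [if_neg hd]
    refine Finset.sum_eq_zero fun k _ => if_neg fun h => hd ⟨k, h⟩

lemma mem_partitionFinset_iff {e : ℕ} {p : ℕ → ℕ} :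
    p ∈ partitionFinset e ↔
      (∀ i j, i ≤ j → p j ≤ p i) ∧ ∑ i ∈ Finset.range (e + 2), p i = e := by
  classical
  unfold partitionFinset
  simp only [Finset.mem_image, Finset.mem_filter, Finset.mem_univ, true_and]
  constructor
  · rintro ⟨l, ⟨hanti, hsum⟩, rfl⟩
    constructor
    · intro i j hij
      by_cases hj : j < e + 2
      · have hi : i < e + 2 := lt_of_le_of_lt hij hj
        simp only [dif_pos hi, dif_pos hj]
        exact_mod_cast hanti ⟨i, hi⟩ ⟨j, hj⟩ hij
      · simp [dif_neg hj]
    · calc ∑ n ∈ Finset.range (e + 2), (if h : n < e + 2 then (l ⟨n, h⟩ : ℕ) else 0)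
          = ∑ i : Fin (e + 2), (if h : (i : ℕ) < e + 2 then (l ⟨i, h⟩ : ℕ) else 0) :=
            (Fin.sum_univ_eq_sum_range _ _).symm
        _ = ∑ i : Fin (e + 2), (l i : ℕ) := Finset.sum_congr rfl fun i _ => by simp [i.isLt]
        _ = e := hsum
  · rintro ⟨hanti, hsum⟩
    have hp0 : p 0 ≤ e := by
      calc p 0 ≤ ∑ i ∈ Finset.range (e + 2), p i :=
            Finset.single_le_sum (fun _ _ => Nat.zero_le _) (Finset.mem_range.mpr (by omega))
        _ = e := hsum
    have hle : ∀ i, p i ≤ e := fun i => le_trans (hanti 0 i (Nat.zero_le _)) hp0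
    have htop : p (e + 1) = 0 := by
      by_contra h
      have h1 : ∀ i ∈ Finset.range (e + 2), 1 ≤ p i := fun i hi =>
        le_trans (by omega) (hanti i (e + 1) (by have := Finset.mem_range.mp hi; omega))
      have h2 := Finset.card_nsmul_le_sum (Finset.range (e + 2)) p 1 h1
      have hsum' : (Finset.range (e + 2)).sum p = e := hsum
      simp at h2
      omega
    refine ⟨fun i => ⟨p i, by have := hle i; omega⟩, ⟨?_, ?_⟩, ?_⟩
    · intro i j hij
      exact_mod_cast hanti i j hij
    · rw [Fin.sum_univ_eq_sum_range (fun n => p n) (e + 2)]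
      exact hsum
    · funext n
      by_cases h : n < e + 2
      · simp [dif_pos h]
      · rw [dif_neg h]
        have : p n ≤ p (e + 1) := hanti (e + 1) n (by omega)
        omega

lemma partition_zero {e : ℕ} {p : ℕ → ℕ} (hp : p ∈ partitionFinset e) :
    ∀ n, e ≤ n → p n = 0 := by
  obtain ⟨hanti, hsum⟩ := mem_partitionFinset_iff.mp hp
  have he : p e = 0 := by
    by_contra h
    have h1 : ∀ i ∈ Finset.range (e + 1), 1 ≤ p i := fun i hi =>
      le_trans (by omega) (hanti i e (by have := Finset.mem_range.mp hi; omega))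
    have h2 := Finset.card_nsmul_le_sum (Finset.range (e + 1)) p 1 h1
    have h3 : ∑ i ∈ Finset.range (e + 1), p i ≤ ∑ i ∈ Finset.range (e + 2), p i :=
      Finset.sum_le_sum_of_subset (Finset.range_subset_range.mpr (by omega))
    have h3' : (Finset.range (e + 1)).sum p ≤ (Finset.range (e + 2)).sum p := h3
    have hsum' : (Finset.range (e + 2)).sum p = e := hsum
    simp at h2
    omega
  intro n hn
  have := hanti e n hn
  omega

lemma tele1 (p : ℕ → ℕ) (hp : ∀ j, p (j + 1) ≤ p j) (n : ℕ) :
    ∑ j ∈ Finset.Icc 1 n, j * (p (j - 1) - p j) + n * p n = ∑ i ∈ Finset.range n, p i := by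
  induction n with
  | zero => simp
  | succ n ih =>
    rw [Finset.sum_Icc_succ_top (by omega), Finset.sum_range_succ, ← ih]
    have h2 : (n + 1) * (p n - p (n + 1)) + (n + 1) * p (n + 1) = n * p n + p n := by
      rw [← Nat.mul_add, Nat.sub_add_cancel (hp n)]
      ring
    simp only [Nat.add_sub_cancel]
    calc ∑ j ∈ Finset.Icc 1 n, j * (p (j - 1) - p j) + (n + 1) * (p n - p (n + 1))
          + (n + 1) * p (n + 1)
        = ∑ j ∈ Finset.Icc 1 n, j * (p (j - 1) - p j)
          + ((n + 1) * (p n - p (n + 1)) + (n + 1) * p (n + 1)) := by ring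
      _ = ∑ j ∈ Finset.Icc 1 n, j * (p (j - 1) - p j) + (n * p n + p n) := by rw [h2]
      _ = ∑ j ∈ Finset.Icc 1 n, j * (p (j - 1) - p j) + n * p n + p n := by ring

lemma tele2 (p : ℕ → ℕ) (hp : ∀ j, p (j + 1) ≤ p j) {k n : ℕ} (hk : k ≤ n) :
    ∑ j ∈ Finset.Icc (k + 1) n, (p (j - 1) - p j) = p k - p n := by
  have hmono : ∀ {i j : ℕ}, i ≤ j → p j ≤ p i := fun hij =>
    antitone_nat_of_succ_le hp hij
  induction n, hk using Nat.le_induction with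
  | base => simp
  | succ n hk ih =>
    rw [Finset.sum_Icc_succ_top (by omega), ih]
    have h1 : p (n + 1) ≤ p n := hp n
    have h2 : p n ≤ p k := hmono hk
    simp only [Nat.add_sub_cancel]
    omega

/-- forward map: partition `p` to the finsupp `j ↦ j * (p (j-1) - p j)`. -/
noncomputable def phimap (d : ℕ) (p : ℕ → ℕ) : ℕ →₀ ℕ :=
  Finsupp.onFinset (Finset.Icc 1 d)
    (fun j => if j ∈ Finset.Icc 1 d then j * (p (j - 1) - p j) else 0)
    (fun j h => by by_contra hc; simp [hc] at h)

/-- backward map: finsupp `l` to the partition `k ↦ ∑_{j=k+1}^d l j / j`. -/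
def psimap (d : ℕ) (l : ℕ → ℕ) (k : ℕ) : ℕ := ∑ j ∈ Finset.Icc (k + 1) d, l j / j

lemma psimap_step (d : ℕ) (l : ℕ → ℕ) {j : ℕ} (hj1 : 1 ≤ j) (hj2 : j ≤ d) :
    psimap d l (j - 1) = l j / j + psimap d l j := by
  unfold psimap
  have hins : Finset.Icc ((j - 1) + 1) d = insert j (Finset.Icc (j + 1) d) := by
    ext t
    simp only [Finset.mem_Icc, Finset.mem_insert]
    omega
  rw [hins, Finset.sum_insert (by simp only [Finset.mem_Icc]; omega)]

end Aux

/-- (Lemma `coeffpartition`.)  For all `d ∈ ℕ` and integers `cᵢ` (`i ≥ 1`), the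
`t^d`-coefficient of `∏_{i≥1} (1-t^i)^{-cᵢ}` equals
`∑_{λ ⊢ d} ∏_{i≥1} binom(cᵢ + λᵢ - λ_{i+1} - 1, λᵢ - λ_{i+1})`. -/
theorem coeff_euler_product_partitions (c : ℕ → ℤ) (d : ℕ) :
    PowerSeries.coeff d
        (prodTail fun i => onePlusPow (-(PowerSeries.X ^ i)) (-(c i : ℚ)))
      = ∑ l ∈ partitionFinset d, ∏ i ∈ Finset.range (d + 1),
          ((zbinom (c (i + 1) + (l i : ℤ) - (l (i + 1) : ℤ) - 1) (l i - l (i + 1)) : ℤ) : ℚ) := by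
  classical
  unfold prodTail
  rw [coeff_mk, PowerSeries.coeff_prod]
  have hco : ∀ l ∈ Finset.finsuppAntidiag (Finset.Icc 1 d) d,
      (∏ i ∈ Finset.Icc 1 d,
        PowerSeries.coeff (l i) ((fun i => onePlusPow (-(X ^ i)) (-(c i : ℚ))) i))
        = ∏ i ∈ Finset.Icc 1 d,
            (if i ∣ l i then ((zbinom (c i + (l i / i : ℕ) - 1) (l i / i) : ℤ) : ℚ) else 0) :=
    fun l _ => Finset.prod_congr rfl fun i hi =>
      coeff_factor (c i) i (l i) (Finset.mem_Icc.mp hi).1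
  rw [Finset.sum_congr rfl hco]
  rw [← Finset.sum_filter_of_ne (p := fun l : ℕ →₀ ℕ => ∀ i ∈ Finset.Icc 1 d, i ∣ l i)
    (fun l _ hne i hi => by
      by_contra hdvd
      exact hne (Finset.prod_eq_zero hi (if_neg hdvd)))]
  refine Finset.sum_nbij' (fun l => psimap d l) (fun p => phimap d p) ?_ ?_ ?_ ?_ ?_
  · -- maps into partitionFinset
    intro l hl
    rw [Finset.mem_filter] at hl
    obtain ⟨hl1, hdvd⟩ := hl
    rw [Finset.mem_finsuppAntidiag] at hl1
    obtain ⟨hsum, hsupp⟩ := hl1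
    rw [mem_partitionFinset_iff]
    constructor
    · intro i j hij
      exact Finset.sum_le_sum_of_subset (Finset.Icc_subset_Icc (by omega) le_rfl)
    · have hswap : ∀ k ∈ Finset.range (d + 2), psimap d (⇑l) k
          = ∑ j ∈ Finset.Icc 1 d, (if k + 1 ≤ j then l j / j else 0) := by
        intro k _
        unfold psimap
        have hfe : Finset.Icc (k + 1) d = (Finset.Icc 1 d).filter (fun j => k + 1 ≤ j) := by
          ext j
          simp only [Finset.mem_Icc, Finset.mem_filter]
          omega
        rw [hfe, Finset.sum_filter]
      rw [Finset.sum_congr rfl hswap, Finset.sum_comm]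
      have hinner : ∀ j ∈ Finset.Icc 1 d,
          (∑ k ∈ Finset.range (d + 2), if k + 1 ≤ j then l j / j else 0) = l j := by
        intro j hj
        obtain ⟨hj1, hj2⟩ := Finset.mem_Icc.mp hj
        rw [← Finset.sum_filter]
        have hfil : (Finset.range (d + 2)).filter (fun k => k + 1 ≤ j) = Finset.range j := by
          ext k
          simp only [Finset.mem_filter, Finset.mem_range]
          omega
        rw [hfil, Finset.sum_const, Finset.card_range, smul_eq_mul,
          Nat.mul_div_cancel' (hdvd j hj)]
      rw [Finset.sum_congr rfl hinner]
      exact hsum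
  · -- maps into filtered antidiag
    intro p hp
    obtain ⟨hanti, hsum⟩ := mem_partitionFinset_iff.mp hp
    have hstep : ∀ j, p (j + 1) ≤ p j := fun j => hanti j (j + 1) (by omega)
    have hz := partition_zero hp
    have happ : ∀ j ∈ Finset.Icc 1 d, (phimap d p) j = j * (p (j - 1) - p j) := by
      intro j hj
      simp only [phimap, Finsupp.onFinset_apply, if_pos hj]
    rw [Finset.mem_filter]
    constructor
    · rw [Finset.mem_finsuppAntidiag]
      refine ⟨?_, Finsupp.support_onFinset_subset⟩
      rw [Finset.sum_congr rfl happ]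
      have ht := tele1 p hstep d
      rw [hz d le_rfl, Nat.mul_zero, Nat.add_zero] at ht
      rw [ht]
      have e1 : ∑ i ∈ Finset.range (d + 2), p i
          = ∑ i ∈ Finset.range d, p i + p d + p (d + 1) := by
        rw [Finset.sum_range_succ, Finset.sum_range_succ]
      rw [e1, hz d le_rfl, hz (d + 1) (by omega)] at hsum
      omega
    · intro i hi
      exact ⟨p (i - 1) - p i, happ i hi⟩
  · -- left inverse
    intro l hl
    rw [Finset.mem_filter] at hl
    obtain ⟨hl1, hdvd⟩ := hl
    rw [Finset.mem_finsuppAntidiag] at hl1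
    obtain ⟨hsum, hsupp⟩ := hl1
    ext j
    by_cases hj : j ∈ Finset.Icc 1 d
    · obtain ⟨hj1, hj2⟩ := Finset.mem_Icc.mp hj
      simp only [phimap, Finsupp.onFinset_apply, if_pos hj]
      have hstep := psimap_step d (⇑l) hj1 hj2
      have hdiff : psimap d (⇑l) (j - 1) - psimap d (⇑l) j = l j / j := by
        rw [hstep, Nat.add_sub_cancel]
      rw [hdiff, Nat.mul_div_cancel' (hdvd j hj)]
    · simp only [phimap, Finsupp.onFinset_apply, if_neg hj]
      symm
      by_contra h
      exact hj (hsupp (Finsupp.mem_support_iff.mpr h))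
  · -- right inverse
    intro p hp
    obtain ⟨hanti, hsum⟩ := mem_partitionFinset_iff.mp hp
    have hstep : ∀ j, p (j + 1) ≤ p j := fun j => hanti j (j + 1) (by omega)
    have hz := partition_zero hp
    funext k
    show psimap d (⇑(phimap d p)) k = p k
    unfold psimap
    have h1 : ∀ j ∈ Finset.Icc (k + 1) d, (phimap d p) j / j = p (j - 1) - p j := by
      intro j hj
      obtain ⟨hj1, hj2⟩ := Finset.mem_Icc.mp hj
      have hj' : j ∈ Finset.Icc 1 d := Finset.mem_Icc.mpr ⟨by omega, hj2⟩
      simp only [phimap, Finsupp.onFinset_apply, if_pos hj']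
      exact Nat.mul_div_cancel_left _ (by omega)
    rw [Finset.sum_congr rfl h1]
    by_cases hk : k ≤ d
    · rw [tele2 p hstep hk, hz d le_rfl, Nat.sub_zero]
    · rw [Finset.Icc_eq_empty (by omega), Finset.sum_empty]
      exact (hz k (by omega)).symm
  · -- summands agree
    intro l hl
    rw [Finset.mem_filter] at hl
    obtain ⟨hl1, hdvd⟩ := hl
    have hd0 : psimap d (⇑l) d = 0 := by
      unfold psimap
      rw [Finset.Icc_eq_empty (by omega), Finset.sum_empty]
    have hd1 : psimap d (⇑l) (d + 1) = 0 := by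
      unfold psimap
      rw [Finset.Icc_eq_empty (by omega), Finset.sum_empty]
    rw [Finset.prod_range_succ]
    have hlast : ((zbinom (c (d + 1) + ((psimap d (⇑l) d : ℕ) : ℤ)
          - ((psimap d (⇑l) (d + 1) : ℕ) : ℤ) - 1)
        (psimap d (⇑l) d - psimap d (⇑l) (d + 1)) : ℤ) : ℚ) = 1 := by
      rw [hd0, hd1]
      norm_num [zbinom_zero]
    rw [hlast, mul_one]
    refine Finset.prod_nbij' (fun i => i - 1) (fun i => i + 1) ?_ ?_ ?_ ?_ ?_
    · intro i hi
      obtain ⟨hi1, hi2⟩ := Finset.mem_Icc.mp hi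
      exact Finset.mem_range.mpr (show i - 1 < d by omega)
    · intro i hi
      have := Finset.mem_range.mp hi
      exact Finset.mem_Icc.mpr ⟨show 1 ≤ i + 1 by omega, show i + 1 ≤ d by omega⟩
    · intro i hi
      obtain ⟨hi1, hi2⟩ := Finset.mem_Icc.mp hi
      show i - 1 + 1 = i
      omega
    · intro i hi
      show i + 1 - 1 = i
      omega
    · intro i hi
      obtain ⟨hi1, hi2⟩ := Finset.mem_Icc.mp hi
      rw [if_pos (hdvd i hi)]
      have hstep := psimap_step d (⇑l) hi1 hi2
      have e0 : i - 1 + 1 = i := by omega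
      rw [e0]
      have e1 : psimap d (⇑l) (i - 1) - psimap d (⇑l) i = l i / i := by
        rw [hstep, Nat.add_sub_cancel]
      have e2 : c i + ((psimap d (⇑l) (i - 1) : ℕ) : ℤ) - ((psimap d (⇑l) i : ℕ) : ℤ) - 1
          = c i + ((l i / i : ℕ) : ℤ) - 1 := by
        rw [hstep]
        push_cast
        ring
      rw [e1, e2]
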